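/- Liveness bound: Suppose each round is good independently with probability at least 1/2, and a transaction tx is included once K good rounds have elapsed (where K = ⌈T_N / T_H⌉ for total pending honest transactions T_N and per-round throughput T_H). If T > 4K and T ≥ 16·c·ln N, then tx is included within T rounds with probability at least 1 - 1/N^c. -/

import Mathlib

open MeasureTheory ProbabilityTheory

/-- Liveness bound: if each round is good independently with probability at
least `1/2` and a transaction is included once `K` good rounds have elapsed,
then for `T > 4K` and `T ≥ 16·c·ln N` the transaction is included within `T`
rounds with probability at least `1 - 1/N^c`. -/
theorem liveness_bound {Ω : Type*} [MeasurableSpace Ω]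
    (μ : Measure Ω) [IsProbabilityMeasure μ]
    (T K N : ℕ) (hN : 2 ≤ N) (p c : ℝ) (hp : 1/2 ≤ p) (hc : 1 ≤ c)
    (X : Fin T → Ω → ℝ)  -- indicator that round i is good
    (hmeas : ∀ i, Measurable (X i))
    (h01 : ∀ i ω, X i ω = 0 ∨ X i ω = 1)
    (hber : ∀ i, μ {ω | X i ω = 1} = ENNReal.ofReal p)
    (hind : iIndepFun X μ)
    (hT : 4 * K < T)
    (hTc : 16 * c * Real.log N ≤ (T : ℝ)) :
    -- the event "at least K good rounds occur among the T rounds",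
    -- i.e. tx is included within T rounds
    1 - ENNReal.ofReal (1 / (N : ℝ) ^ c)
      ≤ μ {ω | (K : ℝ) ≤ ∑ i, X i ω} := by

  set t : ℝ := -Real.log 3 with ht_def
  have ht_neg : t ≤ 0 := neg_nonpos.mpr (Real.log_nonneg (by norm_num))
  have hexp_t : Real.exp t = 1/3 := by
    rw [ht_def, Real.exp_neg, Real.exp_log (by norm_num)]; norm_num
  -- p ≤ 1
  have hp0 : 0 ≤ p := le_trans (by norm_num) hp
  have hTpos : 0 < T := by omega
  have hp1 : p ≤ 1 := by
    have h := measure_mono (μ := μ) (Set.subset_univ {ω | X ⟨0, hTpos⟩ ω = 1})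
    rw [hber, measure_univ] at h
    exact (ENNReal.ofReal_le_one.mp h)
  -- pointwise: exp (t * X i ω) = 1 + (exp t - 1) * X i ω
  have hpt : ∀ i ω, Real.exp (t * X i ω) = 1 + (Real.exp t - 1) * X i ω := by
    intro i ω
    rcases h01 i ω with h | h <;> simp [h]
  -- expectation of X i
  have hEX : ∀ i, μ[X i] = p := by
    intro i
    have hind_eq : X i = Set.indicator {ω | X i ω = 1} (fun _ => (1:ℝ)) := by
      funext ω
      rcases h01 i ω with h | h
      · simp [h, Set.indicator_apply, Set.mem_setOf_eq]
      · simp [h, Set.indicator_apply, Set.mem_setOf_eq]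
    rw [hind_eq, integral_indicator_const, measureReal_def, hber i]
    · simp [ENNReal.toReal_ofReal hp0]
    · exact measurableSet_eq_fun (hmeas i) measurable_const
  have hintX : ∀ i, Integrable (X i) μ := by
    intro i
    have hs : MeasurableSet {ω | X i ω = 1} :=
      measurableSet_eq_fun (hmeas i) measurable_const
    have := (integrable_const (1:ℝ) (μ := μ)).indicator hs
    refine this.congr (Filter.Eventually.of_forall fun ω => ?_)
    rcases h01 i ω with h | h
    · simp [Set.indicator_apply, h, Set.mem_setOf_eq]
    · simp [Set.indicator_apply, h, Set.mem_setOf_eq]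
  have hint_exp : ∀ i, Integrable (fun ω => Real.exp (t * X i ω)) μ := by
    intro i
    refine (((hintX i).const_mul (Real.exp t - 1)).add (integrable_const 1)).congr
      (Filter.Eventually.of_forall fun ω => ?_)
    simp only [Pi.add_apply]
    rw [hpt i ω]; ring
  -- mgf of each X i
  have hmgf : ∀ i, mgf (X i) μ t = 1 + (Real.exp t - 1) * p := by
    intro i
    unfold mgf
    calc μ[fun ω => Real.exp (t * X i ω)]
        = μ[fun ω => (Real.exp t - 1) * X i ω + 1] := by
          refine integral_congr_ae (Filter.Eventually.of_forall fun ω => ?_)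
          show Real.exp (t * X i ω) = _
          rw [hpt i ω]; ring
      _ = (Real.exp t - 1) * p + 1 := by
          rw [integral_add (((hintX i).const_mul _)) (integrable_const 1),
            integral_const_mul, hEX i]
          simp
      _ = 1 + (Real.exp t - 1) * p := by ring
  have hmgf_le : ∀ i, mgf (X i) μ t ≤ 2/3 := by
    intro i
    rw [hmgf i, hexp_t]
    nlinarith
  -- set S
  set S : Ω → ℝ := fun ω => ∑ i, X i ω with hS_def
  have hSmeas : Measurable S := by
    apply Finset.measurable_sum; intro i _; exact hmeas i
  have hint_expS : Integrable (fun ω => Real.exp (t * S ω)) μ := by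
    refine MemLp.integrable le_rfl (MemLp.of_bound ?_ 1 ?_)
    · exact ((hSmeas.const_mul t).exp).aestronglyMeasurable
    · refine Filter.Eventually.of_forall fun ω => ?_
      rw [Real.norm_eq_abs, abs_of_pos (Real.exp_pos _)]
      rw [← Real.exp_zero]
      apply Real.exp_le_exp.mpr
      have hS0 : 0 ≤ S ω := Finset.sum_nonneg fun i _ => by
        rcases h01 i ω with h | h <;> simp [h]
      exact mul_nonpos_of_nonpos_of_nonneg ht_neg hS0
  -- Chernoff
  have hcher := measure_le_le_exp_mul_mgf (μ := μ) (X := S) (K : ℝ) ht_neg hint_expS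
  have hmgfS : mgf S μ t = ∏ i, mgf (X i) μ t := by
    have := hind.mgf_sum (t := t) hmeas Finset.univ
    convert this using 2
    funext ω; simp [hS_def]
  have hprod_le : ∏ i : Fin T, mgf (X i) μ t ≤ (2/3) ^ T := by
    calc ∏ i : Fin T, mgf (X i) μ t ≤ ∏ i : Fin T, (2/3 : ℝ) :=
          Finset.prod_le_prod (fun i _ => mgf_nonneg) (fun i _ => hmgf_le i)
      _ = (2/3) ^ T := by rw [Finset.prod_const, Finset.card_univ, Fintype.card_fin]
  -- numeric: exp(K log 3) * (2/3)^T ≤ exp(-T/16)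
  have hnum : Real.exp (-t * K) * mgf S μ t ≤ Real.exp (-(T:ℝ)/16) := by
    have h1 : Real.exp (-t * K) * mgf S μ t ≤ Real.exp ((K:ℝ) * Real.log 3) * (2/3)^T := by
      have h2 : Real.exp (-t * K) = Real.exp ((K:ℝ) * Real.log 3) := by
        rw [ht_def]; ring_nf
      rw [h2, hmgfS]
      exact mul_le_mul_of_nonneg_left hprod_le (Real.exp_pos _).le
    refine h1.trans ?_
    have h23 : (2/3 : ℝ)^T = Real.exp ((T:ℝ) * Real.log (2/3)) := by
      rw [← Real.log_pow, Real.exp_log (by positivity)]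
    rw [h23, ← Real.exp_add, Real.exp_le_exp]
    -- K * log 3 + T * log(2/3) ≤ -T/16
    have hK : (K:ℝ) ≤ (T:ℝ)/4 := by
      have : (4*K : ℝ) < T := by exact_mod_cast hT
      linarith
    have hlog3pos : 0 < Real.log 3 := Real.log_pos (by norm_num)
    have hstep : (K:ℝ) * Real.log 3 ≤ (T:ℝ)/4 * Real.log 3 :=
      mul_le_mul_of_nonneg_right hK hlog3pos.le
    have hlog23 : Real.log (2/3) = Real.log 2 - Real.log 3 := by
      rw [Real.log_div (by norm_num) (by norm_num)]
    -- key: log 2 - (3/4) log 3 ≤ -1/16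
    have hkey : Real.log 2 - (3/4) * Real.log 3 ≤ -1/16 := by
      have h32 : (1:ℝ)/3 ≤ Real.log (3/2) := by
        have := Real.log_le_sub_one_of_pos (x := (2/3 : ℝ)) (by norm_num)
        have hinv : Real.log (3/2 : ℝ) = - Real.log (2/3 : ℝ) := by
          rw [← Real.log_inv]; norm_num
        rw [hinv]; linarith
      have h3 : Real.log 3 = Real.log 2 + Real.log (3/2) := by
        rw [← Real.log_mul (by norm_num) (by norm_num)]; norm_num
      have h2lt : Real.log 2 < 0.6931471808 := Real.log_two_lt_d9
      rw [h3]; linarith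
    have hTnn : (0:ℝ) ≤ T := Nat.cast_nonneg T
    nlinarith [mul_le_mul_of_nonneg_left hkey hTnn]
  -- exp(-T/16) ≤ 1/N^c
  have hfin : Real.exp (-(T:ℝ)/16) ≤ 1 / (N:ℝ)^c := by
    have hNpos : (0:ℝ) < N := by positivity
    have hN1 : (1:ℝ) < N := by exact_mod_cast hN
    have : 1 / (N:ℝ)^c = Real.exp (-(c * Real.log N)) := by
      rw [Real.exp_neg, Real.rpow_def_of_pos hNpos]
      rw [one_div, mul_comm]
    rw [this, Real.exp_le_exp]
    linarith
  -- put together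
  have hbound : (μ {ω | S ω ≤ (K:ℝ)}).toReal ≤ 1 / (N:ℝ)^c :=
    hcher.trans (hnum.trans hfin)
  have hmeas_set : MeasurableSet {ω | (K : ℝ) ≤ S ω} :=
    measurableSet_le measurable_const hSmeas
  have hcompl : {ω | (K : ℝ) ≤ S ω}ᶜ ⊆ {ω | S ω ≤ (K:ℝ)} := by
    intro ω hω
    simp only [Set.mem_compl_iff, Set.mem_setOf_eq, not_le] at hω ⊢
    exact hω.le
  have h1 : μ {ω | (K : ℝ) ≤ S ω}ᶜ ≤ ENNReal.ofReal (1 / (N:ℝ)^c) := by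
    calc μ {ω | (K : ℝ) ≤ S ω}ᶜ ≤ μ {ω | S ω ≤ (K:ℝ)} := measure_mono hcompl
      _ = ENNReal.ofReal ((μ {ω | S ω ≤ (K:ℝ)}).toReal) := by
          rw [ENNReal.ofReal_toReal (measure_ne_top _ _)]
      _ ≤ ENNReal.ofReal (1 / (N:ℝ)^c) := ENNReal.ofReal_le_ofReal hbound
  have := prob_compl_eq_one_sub (μ := μ) hmeas_set
  calc 1 - ENNReal.ofReal (1 / (N:ℝ)^c) ≤ 1 - μ {ω | (K : ℝ) ≤ S ω}ᶜ :=
        tsub_le_tsub_left h1 1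
    _ = μ {ω | (K : ℝ) ≤ S ω} := by
        rw [this, ENNReal.sub_sub_cancel ENNReal.one_ne_top prob_le_one]
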